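/- Fix m ∈ ℝ and σ > 0. The function p ↦ R(m, σ, p) on the open interval (0,1) has a unique stationary point, located at p* = 1/(1 + exp(A − B)) where A = (m²+σ²)/(2τ1²) + log(τ1/π) and B = (m²+σ²)/(2τ0²) + log(τ0/(1−π)); moreover p* is the global minimizer of p ↦ R(m, σ, p) on (0,1). -/

import Mathlib

/-- The penalty `R(m, σ, p)`. -/
noncomputable def Rpen (τ0 τ1 pr m σ p : ℝ) : ℝ :=
  p * ((m ^ 2 + σ ^ 2) / (2 * τ1 ^ 2) + Real.log (τ1 * p / (σ * pr))) +
    (1 - p) * ((m ^ 2 + σ ^ 2) / (2 * τ0 ^ 2) + Real.log (τ0 * (1 - p) / (σ * (1 - pr))))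

/-- `A = (m²+σ²)/(2τ1²) + log(τ1/π)`. -/
noncomputable def Aq (τ1 pr m σ : ℝ) : ℝ :=
  (m ^ 2 + σ ^ 2) / (2 * τ1 ^ 2) + Real.log (τ1 / pr)

/-- `B = (m²+σ²)/(2τ0²) + log(τ0/(1-π))`. -/
noncomputable def Bq (τ0 pr m σ : ℝ) : ℝ :=
  (m ^ 2 + σ ^ 2) / (2 * τ0 ^ 2) + Real.log (τ0 / (1 - pr))

/-- `p* = 1/(1 + exp(A - B))`. -/
noncomputable def pstar (τ0 τ1 pr m σ : ℝ) : ℝ :=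
  1 / (1 + Real.exp (Aq τ1 pr m σ - Bq τ0 pr m σ))

lemma hasDerivAt_rpen (τ0 τ1 pr m σ : ℝ) (hτ0 : 0 < τ0) (hτ1 : 0 < τ1)
    (hpr : pr ∈ Set.Ioo (0 : ℝ) 1) (hσ : 0 < σ) {p : ℝ} (hp : p ∈ Set.Ioo (0 : ℝ) 1) :
    HasDerivAt (fun p => Rpen τ0 τ1 pr m σ p)
      (Aq τ1 pr m σ - Bq τ0 pr m σ + Real.log p - Real.log (1 - p)) p := by
  obtain ⟨hp0, hp1⟩ := hp
  obtain ⟨hpr0, hpr1⟩ := hpr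
  have h1p : (0:ℝ) < 1 - p := by linarith
  have h1pr : (0:ℝ) < 1 - pr := by linarith
  have hc1 : τ1 * p / (σ * pr) ≠ 0 := by positivity
  have hc0 : τ0 * (1 - p) / (σ * (1 - pr)) ≠ 0 := by positivity
  have hlog1 : HasDerivAt (fun q : ℝ => Real.log (τ1 * q / (σ * pr))) (1 / p) p := by
    have hin : HasDerivAt (fun q : ℝ => τ1 * q / (σ * pr)) (τ1 / (σ * pr)) p :=
      ((hasDerivAt_id p).const_mul τ1).div_const (σ * pr) |>.congr_deriv (by ring)
    have := (Real.hasDerivAt_log hc1).comp p hin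
    refine this.congr_deriv ?_
    field_simp
  have hlog0 : HasDerivAt (fun q : ℝ => Real.log (τ0 * (1 - q) / (σ * (1 - pr))))
      (-(1 / (1 - p))) p := by
    have hin : HasDerivAt (fun q : ℝ => τ0 * (1 - q) / (σ * (1 - pr)))
        (-(τ0 / (σ * (1 - pr)))) p := by
      have : HasDerivAt (fun q : ℝ => 1 - q) (-1) p := by
        simpa using (hasDerivAt_id' p).const_sub (1:ℝ)
      exact ((this.const_mul τ0).div_const (σ * (1 - pr))).congr_deriv (by ring)
    have := (Real.hasDerivAt_log hc0).comp p hin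
    refine this.congr_deriv ?_
    field_simp
  have hA : HasDerivAt (fun q : ℝ => q * ((m ^ 2 + σ ^ 2) / (2 * τ1 ^ 2) +
      Real.log (τ1 * q / (σ * pr))))
      (((m ^ 2 + σ ^ 2) / (2 * τ1 ^ 2) + Real.log (τ1 * p / (σ * pr))) + p * (1 / p)) p := by
    have := (hasDerivAt_id p).mul ((hasDerivAt_const p ((m ^ 2 + σ ^ 2) / (2 * τ1 ^ 2))).add hlog1)
    refine this.congr_deriv ?_
    simp only [id_eq, Pi.add_apply]
    ring
  have hB : HasDerivAt (fun q : ℝ => (1 - q) * ((m ^ 2 + σ ^ 2) / (2 * τ0 ^ 2) +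
      Real.log (τ0 * (1 - q) / (σ * (1 - pr)))))
      ((-1) * ((m ^ 2 + σ ^ 2) / (2 * τ0 ^ 2) + Real.log (τ0 * (1 - p) / (σ * (1 - pr)))) +
        (1 - p) * (-(1 / (1 - p)))) p := by
    have hone : HasDerivAt (fun q : ℝ => 1 - q) (-1) p := by
      simpa using (hasDerivAt_id' p).const_sub (1:ℝ)
    have := hone.mul ((hasDerivAt_const p ((m ^ 2 + σ ^ 2) / (2 * τ0 ^ 2))).add hlog0)
    refine this.congr_deriv ?_
    simp only [Pi.add_apply]
    ring
  have htot := hA.add hB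
  refine htot.congr_deriv ?_
  have e1 : Real.log (τ1 * p / (σ * pr)) =
      Real.log (τ1 / pr) + Real.log p - Real.log σ := by
    rw [Real.log_div (by positivity) (by positivity), Real.log_mul hτ1.ne' hp0.ne',
      Real.log_mul hσ.ne' hpr0.ne', Real.log_div hτ1.ne' hpr0.ne']
    ring
  have e0 : Real.log (τ0 * (1 - p) / (σ * (1 - pr))) =
      Real.log (τ0 / (1 - pr)) + Real.log (1 - p) - Real.log σ := by
    rw [Real.log_div (by positivity) (by positivity), Real.log_mul hτ0.ne' h1p.ne',
      Real.log_mul hσ.ne' h1pr.ne', Real.log_div hτ0.ne' h1pr.ne']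
    ring
  rw [e1, e0]
  unfold Aq Bq
  field_simp
  ring

/-- `p ↦ R(m,σ,p)` on `(0,1)` has a unique stationary point, located at
`p* = 1/(1 + exp(A - B))`, and `p*` is the global minimizer on `(0,1)`. -/
theorem pstar_unique_stationary_global_min
    (τ0 τ1 pr : ℝ) (hτ0 : 0 < τ0) (hτ01 : τ0 < τ1) (hpr : pr ∈ Set.Ioo (0 : ℝ) 1)
    (m σ : ℝ) (hσ : 0 < σ) :
    pstar τ0 τ1 pr m σ ∈ Set.Ioo (0 : ℝ) 1 ∧
    deriv (fun p => Rpen τ0 τ1 pr m σ p) (pstar τ0 τ1 pr m σ) = 0 ∧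
    (∀ p ∈ Set.Ioo (0 : ℝ) 1,
      deriv (fun p => Rpen τ0 τ1 pr m σ p) p = 0 → p = pstar τ0 τ1 pr m σ) ∧
    (∀ p ∈ Set.Ioo (0 : ℝ) 1,
      Rpen τ0 τ1 pr m σ (pstar τ0 τ1 pr m σ) ≤ Rpen τ0 τ1 pr m σ p) := by
  have hτ1 : 0 < τ1 := hτ0.trans hτ01
  set A := Aq τ1 pr m σ
  set B := Bq τ0 pr m σ
  set E := Real.exp (A - B) with hE
  have hEpos : 0 < E := Real.exp_pos _
  have h1E : (0:ℝ) < 1 + E := by linarith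
  set ps := pstar τ0 τ1 pr m σ with hps
  have hpsval : ps = 1 / (1 + E) := rfl
  have hpsIoo : ps ∈ Set.Ioo (0:ℝ) 1 := by
    constructor
    · rw [hpsval]; positivity
    · rw [hpsval, div_lt_one h1E]; linarith
  have h1ps : 1 - ps = E / (1 + E) := by
    rw [hpsval]; field_simp; ring
  -- derivative formula
  have hderiv : ∀ p ∈ Set.Ioo (0:ℝ) 1, deriv (fun p => Rpen τ0 τ1 pr m σ p) p =
      A - B + Real.log p - Real.log (1 - p) := fun p hp =>
    (hasDerivAt_rpen τ0 τ1 pr m σ hτ0 hτ1 hpr hσ hp).deriv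
  have hlogps : Real.log ps - Real.log (1 - ps) = -(A - B) := by
    have h2 : (1:ℝ) - 1 / (1 + E) = E / (1 + E) := by field_simp; ring
    rw [hpsval, h2, Real.log_div (one_ne_zero) h1E.ne', Real.log_div hEpos.ne' h1E.ne',
      Real.log_one, hE, Real.log_exp]
    ring
  have hderivps : deriv (fun p => Rpen τ0 τ1 pr m σ p) ps = 0 := by
    rw [hderiv ps hpsIoo]; linarith
  -- strict monotone logit
  have hmono : ∀ x ∈ Set.Ioo (0:ℝ) 1, ∀ y ∈ Set.Ioo (0:ℝ) 1, x < y →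
      Real.log x - Real.log (1 - x) < Real.log y - Real.log (1 - y) := by
    intro x hx y hy hxy
    have h1 : Real.log x < Real.log y := Real.log_lt_log hx.1 hxy
    have h2 : Real.log (1 - y) < Real.log (1 - x) :=
      Real.log_lt_log (by linarith [hy.2]) (by linarith)
    linarith
  refine ⟨hpsIoo, hderivps, ?_, ?_⟩
  · intro p hp h0
    rw [hderiv p hp] at h0
    by_contra hne
    rcases lt_or_gt_of_ne hne with h | h
    · have := hmono p hp ps hpsIoo h
      linarith
    · have := hmono ps hpsIoo p hp h
      linarith
  · intro p hp
    rcases lt_trichotomy p ps with h | h | h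
    · have hanti : StrictAntiOn (fun p => Rpen τ0 τ1 pr m σ p) (Set.Icc p ps) := by
        apply strictAntiOn_of_deriv_neg (convex_Icc _ _)
        · intro x hx
          have hxI : x ∈ Set.Ioo (0:ℝ) 1 :=
            ⟨lt_of_lt_of_le hp.1 hx.1, lt_of_le_of_lt hx.2 hpsIoo.2⟩
          exact (hasDerivAt_rpen τ0 τ1 pr m σ hτ0 hτ1 hpr hσ hxI).continuousAt.continuousWithinAt
        · intro x hx
          rw [interior_Icc] at hx
          have hxI : x ∈ Set.Ioo (0:ℝ) 1 := ⟨hp.1.trans hx.1, hx.2.trans hpsIoo.2⟩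
          rw [hderiv x hxI]
          have := hmono x hxI ps hpsIoo hx.2
          linarith
      exact le_of_lt (hanti (Set.left_mem_Icc.2 h.le) (Set.right_mem_Icc.2 h.le) h)
    · rw [h]
    · have hmon : StrictMonoOn (fun p => Rpen τ0 τ1 pr m σ p) (Set.Icc ps p) := by
        apply strictMonoOn_of_deriv_pos (convex_Icc _ _)
        · intro x hx
          have hxI : x ∈ Set.Ioo (0:ℝ) 1 :=
            ⟨lt_of_lt_of_le hpsIoo.1 hx.1, lt_of_le_of_lt hx.2 hp.2⟩
          exact (hasDerivAt_rpen τ0 τ1 pr m σ hτ0 hτ1 hpr hσ hxI).continuousAt.continuousWithinAt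
        · intro x hx
          rw [interior_Icc] at hx
          have hxI : x ∈ Set.Ioo (0:ℝ) 1 := ⟨hpsIoo.1.trans hx.1, hx.2.trans hp.2⟩
          rw [hderiv x hxI]
          have := hmono ps hpsIoo x hxI hx.1
          linarith
      exact le_of_lt (hmon (Set.left_mem_Icc.2 h.le) (Set.right_mem_Icc.2 h.le) h)
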